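/- Let S be a measurable space and suppose V_* , V_† ≡ 0, and for each s ≥ 0 a reserve V_{(⋄,s)} : [0,∞) → ℝ are C^1 functions satisfying, for continuous nonnegative rates μ_{⋄*}(t,τ), μ_{⋄†}(t) and constant r ≥ 0, the ODE d/dt V_{(⋄,s)}(t) = (μ_{⋄*}(t,t-s)·1_{[0,∞)}(t-s) + μ_{⋄†}(t) + r) V_{(⋄,s)}(t) - 1 - V_*(t)·μ_{⋄*}(t,t-s)·1_{[0,∞)}(t-s) on [s, T] with terminal condition V_{(⋄,s)}(T) = 0, where V_* satisfies d/dt V_*(t) = (μ_{*†}(t)+μ_{*⋄}(t)+r) V_*(t) - V_{(⋄,t)}(t) μ_{*⋄}(t), V_*(T)=0. If all payment and rate functions are nonnegative, then V_{(⋄,s)}(t) ≥ 0 and V_*(t) ≥ 0 for all t ∈ [0,T]. -/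

import Mathlib

open Set Filter Topology

lemma cross_aux (a b : ℝ) (f h f' h' : ℝ → ℝ)
    (hf : ∀ u ∈ Set.Icc a b, HasDerivAt f (f' u) u)
    (hh : ∀ u ∈ Set.Icc a b, HasDerivAt h (h' u) u)
    (hb : h b < f b)
    (key : ∀ u ∈ Set.Ico a b, f u = h u → (∀ v ∈ Set.Ioc u b, h v < f v) → f' u < h' u) :
    ∀ u ∈ Set.Icc a b, h u < f u := by
  by_contra hcon
  push_neg at hcon
  obtain ⟨u₀, hu₀, hle⟩ := hcon
  set g : ℝ → ℝ := fun u => f u - h u with hgdef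
  have hgd : ∀ u ∈ Set.Icc a b, HasDerivAt g (f' u - h' u) u :=
    fun u hu => (hf u hu).sub (hh u hu)
  have hgc : ContinuousOn g (Set.Icc a b) :=
    fun u hu => ((hgd u hu).continuousAt).continuousWithinAt
  set S := Set.Icc a b ∩ g ⁻¹' Set.Iic 0 with hS
  have hSne : S.Nonempty := ⟨u₀, hu₀, by simpa [g] using sub_nonpos.mpr hle⟩
  have hScl : IsClosed S := hgc.preimage_isClosed_of_isClosed isClosed_Icc isClosed_Iic
  have hSbdd : BddAbove S := BddAbove.mono Set.inter_subset_left bddAbove_Icc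
  set u₁ := sSup S with hu₁def
  have hu₁S : u₁ ∈ S := hScl.csSup_mem hSne hSbdd
  obtain ⟨hu₁I, hu₁g⟩ := hu₁S
  have hg₁ : g u₁ ≤ 0 := hu₁g
  have hne : u₁ ≠ b := by
    intro hbe
    rw [hbe] at hg₁
    exact absurd (sub_pos.mpr hb) (not_lt.mpr hg₁)
  have hlt : u₁ < b := lt_of_le_of_ne hu₁I.2 hne
  have hright : ∀ v ∈ Set.Ioc u₁ b, 0 < g v := by
    intro v hv
    by_contra hvg
    push_neg at hvg
    have hvS : v ∈ S := ⟨⟨hu₁I.1.trans hv.1.le, hv.2⟩, hvg⟩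
    exact absurd (le_csSup hSbdd hvS) (not_le.mpr hv.1)
  have hg₁0 : g u₁ = 0 := by
    refine le_antisymm hg₁ ?_
    have hct : Filter.Tendsto g (𝓝[>] u₁) (𝓝 (g u₁)) :=
      ((hgd u₁ hu₁I).continuousAt).continuousWithinAt
    refine ge_of_tendsto hct ?_
    filter_upwards [Ioc_mem_nhdsGT_of_mem ⟨le_refl u₁, hlt⟩] with v hv
    exact (hright v hv).le
  have hkey : f' u₁ < h' u₁ := by
    refine key u₁ ⟨hu₁I.1, hlt⟩ (sub_eq_zero.mp hg₁0) ?_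
    intro v hv
    exact sub_pos.mp (hright v hv)
  have hD : f' u₁ - h' u₁ < 0 := sub_neg.mpr hkey
  have hslope : Filter.Tendsto (slope g u₁) (𝓝[>] u₁) (𝓝 (f' u₁ - h' u₁)) :=
    (hasDerivAt_iff_tendsto_slope.mp (hgd u₁ hu₁I)).mono_left
      (nhdsWithin_mono _ (fun y hy => by simpa using (ne_of_gt hy)))
  have hev1 : ∀ᶠ v in 𝓝[>] u₁, slope g u₁ v < 0 := hslope.eventually_lt_const hD
  have hev2 : Set.Ioc u₁ b ∈ 𝓝[>] u₁ := Ioc_mem_nhdsGT_of_mem ⟨le_refl u₁, hlt⟩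
  obtain ⟨v, hv1, hv2⟩ := (hev1.and hev2).exists
  have hvpos : 0 < v - u₁ := sub_pos.mpr hv2.1
  rw [slope_def_field] at hv1
  have hgv : g v - g u₁ < 0 := by
    by_contra hge
    push_neg at hge
    exact absurd hv1 (not_lt.mpr (div_nonneg hge hvpos.le))
  rw [hg₁0] at hgv
  exact absurd (hright v hv2) (not_lt.mpr (by linarith))


/-- Nonnegativity of prospective reserves in the disability-with-rehabilitation
model.  `Vstar` is the reserve in the healthy state `*`, `Vd s` is the reserve
in the disabled state `(⋄, s)` (disability onset at time `s`), the reserve in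
the dead state `†` is identically `0`, the benefit rate in the disabled state
is `1`, and `T` is the retirement (terminal) time.  The indicator
`1_{[0,∞)}(t-s)` is written via an `if`. -/
theorem disability_reserves_nonneg
    (T : ℝ) (hT : 0 ≤ T) (r : ℝ) (hr : 0 ≤ r)
    (μsd μsD μdd : ℝ → ℝ) (μds : ℝ → ℝ → ℝ)  -- μ_{*†}, μ_{*⋄}, μ_{⋄†}, μ_{⋄*}(t,τ)
    (hμsd_cont : Continuous μsd) (hμsD_cont : Continuous μsD)
    (hμdd_cont : Continuous μdd)
    (hμds_cont : Continuous fun p : ℝ × ℝ => μds p.1 p.2)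
    (hμsd_nonneg : ∀ t, 0 ≤ μsd t) (hμsD_nonneg : ∀ t, 0 ≤ μsD t)
    (hμdd_nonneg : ∀ t, 0 ≤ μdd t) (hμds_nonneg : ∀ t τ, 0 ≤ μds t τ)
    (Vstar : ℝ → ℝ) (Vd : ℝ → ℝ → ℝ)
    (hVstar_C1 : ContDiffOn ℝ 1 Vstar (Set.Icc 0 T))
    (hVd_C1 : ∀ s ∈ Set.Icc 0 T, ContDiffOn ℝ 1 (Vd s) (Set.Icc s T))
    -- Thiele's ODE for the disabled-state reserves, on [s, T]:
    (hVd_ODE : ∀ s ∈ Set.Icc 0 T, ∀ t ∈ Set.Icc s T,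
      HasDerivAt (Vd s)
        ((μds t (t - s) * (if 0 ≤ t - s then (1 : ℝ) else 0) + μdd t + r) * Vd s t
          - 1 - Vstar t * (μds t (t - s) * (if 0 ≤ t - s then (1 : ℝ) else 0))) t)
    (hVd_T : ∀ s ∈ Set.Icc 0 T, Vd s T = 0)
    -- Thiele's ODE for the healthy-state reserve:
    (hVstar_ODE : ∀ t ∈ Set.Icc 0 T,
      HasDerivAt Vstar
        ((μsd t + μsD t + r) * Vstar t - Vd t t * μsD t) t)
    (hVstar_T : Vstar T = 0) :
    (∀ s ∈ Set.Icc 0 T, ∀ t ∈ Set.Icc s T, 0 ≤ Vd s t) ∧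
    (∀ t ∈ Set.Icc 0 T, 0 ≤ Vstar t) := by
  -- bounds on the rates
  obtain ⟨C₁, hC₁⟩ := (isCompact_Icc.prod isCompact_Icc).exists_bound_of_continuousOn
      (s := Set.Icc (0:ℝ) T ×ˢ Set.Icc (-T) T) hμds_cont.continuousOn
  obtain ⟨C₂, hC₂⟩ := isCompact_Icc.exists_bound_of_continuousOn
      (s := Set.Icc (0:ℝ) T) hμsD_cont.continuousOn
  set M := max 1 (max C₁ C₂) with hMdef
  have hM1 : (1:ℝ) ≤ M := le_max_left _ _
  have hM0 : (0:ℝ) < M := lt_of_lt_of_le one_pos hM1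
  have hMds : ∀ u s : ℝ, u ∈ Set.Icc 0 T → s ∈ Set.Icc 0 T → μds u (u - s) ≤ M := by
    intro u s hu hs
    have h2 : u - s ∈ Set.Icc (-T) T :=
      ⟨by linarith [hu.1, hs.2], by linarith [hu.2, hs.1]⟩
    have hmem : ((u, u - s) : ℝ × ℝ) ∈ Set.Icc (0:ℝ) T ×ˢ Set.Icc (-T) T :=
      Set.mk_mem_prod hu h2
    have hb := hC₁ (u, u - s) hmem
    rw [Real.norm_eq_abs] at hb
    calc μds u (u - s) ≤ |μds u (u - s)| := le_abs_self _
      _ ≤ C₁ := hb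
      _ ≤ M := le_trans (le_max_left _ _) (le_max_right _ _)
  have hMsD : ∀ u ∈ Set.Icc (0:ℝ) T, μsD u ≤ M := by
    intro u hu
    have hb := hC₂ u hu
    rw [Real.norm_eq_abs] at hb
    calc μsD u ≤ |μsD u| := le_abs_self _
      _ ≤ C₂ := hb
      _ ≤ M := le_trans (le_max_right _ _) (le_max_right _ _)
  -- the perturbation function and its derivative
  have hφd : ∀ (ε t : ℝ), HasDerivAt (fun u => -ε * Real.exp (2*M*(T-u)))
      (2*M*ε*Real.exp (2*M*(T-t))) t := by
    intro ε t
    have h1 : HasDerivAt (fun u : ℝ => 2*M*(T-u)) (-(2*M)) t := by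
      simpa using ((hasDerivAt_id t).const_sub T).const_mul (2*M)
    have h3 := h1.exp.const_mul (-ε)
    have e : 2*M*ε*Real.exp (2*M*(T-t)) = -ε * (Real.exp (2*M*(T-t)) * -(2*M)) := by ring
    rw [e]; exact h3
  -- Claim 1 : a lower barrier for Vstar propagates (strictly) to the Vd's
  have claim1 : ∀ ε : ℝ, 0 < ε → ∀ t₁ : ℝ, t₁ ≤ T →
      (∀ v ∈ Set.Icc t₁ T, -ε * Real.exp (2*M*(T-v)) ≤ Vstar v) →
      ∀ s ∈ Set.Icc 0 T, ∀ u ∈ Set.Icc (max s t₁) T,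
        -ε * Real.exp (2*M*(T-u)) < Vd s u := by
    intro ε hε t₁ ht₁ hVs s hs
    refine cross_aux (max s t₁) T (Vd s)
      (fun u => -ε * Real.exp (2*M*(T-u)))
      (fun u => (μds u (u - s) * (if 0 ≤ u - s then (1:ℝ) else 0) + μdd u + r) * Vd s u
          - 1 - Vstar u * (μds u (u - s) * (if 0 ≤ u - s then (1:ℝ) else 0)))
      (fun u => 2*M*ε*Real.exp (2*M*(T-u)))
      (fun u hu => hVd_ODE s hs u ⟨(le_max_left s t₁).trans hu.1, hu.2⟩)
      (fun u hu => hφd ε u) ?_ ?_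
    · show -ε * Real.exp (2*M*(T-T)) < Vd s T
      rw [hVd_T s hs, sub_self, mul_zero, Real.exp_zero, mul_one]
      linarith
    · intro u hu hfu _
      have hfu' : Vd s u = -ε * Real.exp (2*M*(T-u)) := hfu
      have huI : u ∈ Set.Icc (0:ℝ) T :=
        ⟨le_trans hs.1 (le_trans (le_max_left s t₁) hu.1), hu.2.le⟩
      have he : (0:ℝ) < Real.exp (2*M*(T-u)) := Real.exp_pos _
      have hau0 : 0 ≤ μds u (u - s) * (if 0 ≤ u - s then (1:ℝ) else 0) := by
        split_ifs with hi
        · simpa using hμds_nonneg u (u - s)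
        · simp
      have hauM : μds u (u - s) * (if 0 ≤ u - s then (1:ℝ) else 0) ≤ M := by
        split_ifs with hi
        · simpa using hMds u s huI hs
        · simpa using hM0.le
      have hVsu : -ε * Real.exp (2*M*(T-u)) ≤ Vstar u :=
        hVs u ⟨le_trans (le_max_right s t₁) hu.1, hu.2.le⟩
      show (μds u (u - s) * (if 0 ≤ u - s then (1:ℝ) else 0) + μdd u + r) * Vd s u
          - 1 - Vstar u * (μds u (u - s) * (if 0 ≤ u - s then (1:ℝ) else 0))
          < 2*M*ε*Real.exp (2*M*(T-u))
      rw [hfu']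
      set au := μds u (u - s) * (if 0 ≤ u - s then (1:ℝ) else 0) with hau
      set e := Real.exp (2*M*(T-u)) with hedef
      have h1 : (au + μdd u + r) * (-ε * e) ≤ 0 := by
        apply mul_nonpos_of_nonneg_of_nonpos
        · have := hμdd_nonneg u; linarith
        · nlinarith
      have h2 : -(Vstar u * au) ≤ ε * e * au := by nlinarith
      have h3 : ε * e * au ≤ ε * e * M :=
        mul_le_mul_of_nonneg_left hauM (by positivity)
      nlinarith [mul_pos (mul_pos hM0 hε) he]
  -- Claim 2 : the lower barrier holds for Vstar
  have claim2 : ∀ ε : ℝ, 0 < ε → ∀ t ∈ Set.Icc (0:ℝ) T,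
      -ε * Real.exp (2*M*(T-t)) < Vstar t := by
    intro ε hε
    refine cross_aux 0 T Vstar
      (fun u => -ε * Real.exp (2*M*(T-u)))
      (fun u => (μsd u + μsD u + r) * Vstar u - Vd u u * μsD u)
      (fun u => 2*M*ε*Real.exp (2*M*(T-u)))
      (fun u hu => hVstar_ODE u hu)
      (fun u hu => hφd ε u) ?_ ?_
    · show -ε * Real.exp (2*M*(T-T)) < Vstar T
      rw [hVstar_T, sub_self, mul_zero, Real.exp_zero, mul_one]
      linarith
    · intro u hu hfu hafter
      have hfu' : Vstar u = -ε * Real.exp (2*M*(T-u)) := hfu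
      have hVs : ∀ v ∈ Set.Icc u T, -ε * Real.exp (2*M*(T-v)) ≤ Vstar v := by
        intro v hv
        rcases eq_or_lt_of_le hv.1 with heq | hlt
        · rw [← heq]; exact le_of_eq hfu'.symm
        · exact (hafter v ⟨hlt, hv.2⟩).le
      have hVdu : -ε * Real.exp (2*M*(T-u)) < Vd u u :=
        claim1 ε hε u hu.2.le hVs u ⟨hu.1, hu.2.le⟩ u ⟨(max_self u).le, hu.2.le⟩
      show (μsd u + μsD u + r) * Vstar u - Vd u u * μsD u < 2*M*ε*Real.exp (2*M*(T-u))
      rw [hfu']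
      set e := Real.exp (2*M*(T-u)) with hedef
      have he : (0:ℝ) < e := Real.exp_pos _
      have hsDM : μsD u ≤ M := hMsD u ⟨hu.1, hu.2.le⟩
      have h1 : (μsd u + μsD u + r) * (-ε * e) ≤ 0 := by
        apply mul_nonpos_of_nonneg_of_nonpos
        · have := hμsd_nonneg u; have := hμsD_nonneg u; linarith
        · nlinarith
      have h2 : -(Vd u u * μsD u) ≤ ε * e * μsD u := by
        have := hμsD_nonneg u
        nlinarith
      have h3 : ε * e * μsD u ≤ ε * e * M :=
        mul_le_mul_of_nonneg_left hsDM (by positivity)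
      nlinarith [mul_pos (mul_pos hM0 hε) he]
  -- conclude nonnegativity of Vstar
  have hVstar_nonneg : ∀ t ∈ Set.Icc (0:ℝ) T, 0 ≤ Vstar t := by
    intro t ht
    by_contra hneg
    push_neg at hneg
    have he : (0:ℝ) < Real.exp (2*M*(T-t)) := Real.exp_pos _
    have hε : 0 < -Vstar t / Real.exp (2*M*(T-t)) := div_pos (by linarith) he
    have hc := claim2 _ hε t ht
    have heq : -(-Vstar t / Real.exp (2*M*(T-t))) * Real.exp (2*M*(T-t)) = Vstar t := by
      field_simp
    rw [heq] at hc
    exact lt_irrefl _ hc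
  -- conclude nonnegativity of the Vd's
  refine ⟨?_, hVstar_nonneg⟩
  intro s hs t ht
  by_contra hneg
  push_neg at hneg
  have he : (0:ℝ) < Real.exp (2*M*(T-t)) := Real.exp_pos _
  have hε : 0 < -Vd s t / Real.exp (2*M*(T-t)) := div_pos (by linarith) he
  have h0 : ∀ v ∈ Set.Icc (0:ℝ) T,
      -(-Vd s t / Real.exp (2*M*(T-t))) * Real.exp (2*M*(T-v)) ≤ Vstar v := by
    intro v hv
    refine le_trans ?_ (hVstar_nonneg v hv)
    have := Real.exp_pos (2*M*(T-v))
    nlinarith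
  have hc := claim1 _ hε 0 hT h0 s hs t ⟨max_le ht.1 (hs.1.trans ht.1), ht.2⟩
  have heq : -(-Vd s t / Real.exp (2*M*(T-t))) * Real.exp (2*M*(T-t)) = Vd s t := by
    field_simp
  rw [heq] at hc
  exact lt_irrefl _ hc
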